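/- Let V̂ and V be bounded functions on a finite state set S satisfying V̂(s) = r(s) + γ Σ_{s'} P̂(s'|s) V̂(s') and V(s) = r(s) + γ Σ_{s'} P(s'|s) V(s'), with ‖V‖_∞ ≤ r_max/(1-γ) and Σ_{s'} |P̂(s'|s) - P(s'|s)| ≤ ε for all s. Then ‖V̂ - V‖_∞ ≤ γ ε r_max / (1-γ)². -/
import Mathlib


/-- Value-function perturbation bound under transition estimation error:
`‖V̂ - V‖_∞ ≤ γ ε r_max / (1-γ)²`. -/
theorem value_sampling_error_bound
    {S : Type*} [Fintype S] [Nonempty S]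
    (Phat P : S → S → ℝ)
    (hPhat0 : ∀ s s', 0 ≤ Phat s s') (hPhat1 : ∀ s, ∑ s', Phat s s' = 1)
    (hP0 : ∀ s s', 0 ≤ P s s') (hP1 : ∀ s, ∑ s', P s s' = 1)
    (r : S → ℝ) (γ ε rmax : ℝ)
    (hγ0 : 0 ≤ γ) (hγ1 : γ < 1) (hε : 0 < ε) (hrmax : 0 < rmax)
    (Vhat V : S → ℝ)
    (hVhat : ∀ s, Vhat s = r s + γ * ∑ s', Phat s s' * Vhat s')
    (hV : ∀ s, V s = r s + γ * ∑ s', P s s' * V s')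
    (hVbound : ∀ s, |V s| ≤ rmax / (1 - γ))
    (hsample : ∀ s, ∑ s', |Phat s s' - P s s'| ≤ ε) :
    ∀ s, |Vhat s - V s| ≤ γ * ε * rmax / (1 - γ) ^ 2 := by
  have h1γ : (0:ℝ) < 1 - γ := by linarith
  set M : ℝ := Finset.univ.sup' (Finset.univ_nonempty) (fun s => |Vhat s - V s|) with hM
  have hle : ∀ s, |Vhat s - V s| ≤ M := fun s =>
    Finset.le_sup' (fun s => |Vhat s - V s|) (Finset.mem_univ s)
  -- key per-state bound
  have key : ∀ s, |Vhat s - V s| ≤ γ * M + γ * ε * (rmax / (1 - γ)) := by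
    intro s
    have hdiff : Vhat s - V s =
        γ * (∑ s', Phat s s' * (Vhat s' - V s')) +
        γ * (∑ s', (Phat s s' - P s s') * V s') := by
      have hsum : (∑ s', Phat s s' * (Vhat s' - V s')) +
          (∑ s', (Phat s s' - P s s') * V s') =
          (∑ s', Phat s s' * Vhat s') - (∑ s', P s s' * V s') := by
        rw [← Finset.sum_add_distrib, ← Finset.sum_sub_distrib]
        apply Finset.sum_congr rfl
        intro x _
        ring
      rw [hVhat s, hV s, ← mul_add, hsum]
      ring
    rw [hdiff]
    have h1 : |∑ s', Phat s s' * (Vhat s' - V s')| ≤ M := by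
      calc |∑ s', Phat s s' * (Vhat s' - V s')|
          ≤ ∑ s', |Phat s s' * (Vhat s' - V s')| := Finset.abs_sum_le_sum_abs _ _
        _ ≤ ∑ s', Phat s s' * M := by
            apply Finset.sum_le_sum
            intro i _
            rw [abs_mul, abs_of_nonneg (hPhat0 s i)]
            exact mul_le_mul_of_nonneg_left (hle i) (hPhat0 s i)
        _ = M := by rw [← Finset.sum_mul, hPhat1 s, one_mul]
    have h2 : |∑ s', (Phat s s' - P s s') * V s'| ≤ ε * (rmax / (1 - γ)) := by
      calc |∑ s', (Phat s s' - P s s') * V s'|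
          ≤ ∑ s', |(Phat s s' - P s s') * V s'| := Finset.abs_sum_le_sum_abs _ _
        _ ≤ ∑ s', |Phat s s' - P s s'| * (rmax / (1 - γ)) := by
            apply Finset.sum_le_sum
            intro i _
            rw [abs_mul]
            exact mul_le_mul_of_nonneg_left (hVbound i) (abs_nonneg _)
        _ ≤ ε * (rmax / (1 - γ)) := by
            rw [← Finset.sum_mul]
            apply mul_le_mul_of_nonneg_right (hsample s)
            positivity
    calc |γ * (∑ s', Phat s s' * (Vhat s' - V s')) +
          γ * (∑ s', (Phat s s' - P s s') * V s')|
        ≤ |γ * (∑ s', Phat s s' * (Vhat s' - V s'))| +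
          |γ * (∑ s', (Phat s s' - P s s') * V s')| := abs_add_le _ _
      _ ≤ γ * M + γ * (ε * (rmax / (1 - γ))) := by
          rw [abs_mul, abs_mul, abs_of_nonneg hγ0]
          exact add_le_add (mul_le_mul_of_nonneg_left h1 hγ0)
            (mul_le_mul_of_nonneg_left h2 hγ0)
      _ = γ * M + γ * ε * (rmax / (1 - γ)) := by ring
  -- apply to the maximizing state
  obtain ⟨s₀, -, hs₀⟩ := Finset.exists_mem_eq_sup' (Finset.univ_nonempty)
      (fun s => |Vhat s - V s|)
  have hMeq : M = |Vhat s₀ - V s₀| := hs₀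
  have hMbound : M ≤ γ * M + γ * ε * (rmax / (1 - γ)) := hMeq ▸ key s₀
  have hMfinal : M ≤ γ * ε * rmax / (1 - γ) ^ 2 := by
    have : (1 - γ) * M ≤ γ * ε * (rmax / (1 - γ)) := by linarith
    rw [le_div_iff₀ (by positivity : (0:ℝ) < (1 - γ) ^ 2)]
    have h2 : (1 - γ) * ((1 - γ) * M) ≤ γ * ε * rmax := by
      calc (1 - γ) * ((1 - γ) * M) ≤ (1 - γ) * (γ * ε * (rmax / (1 - γ))) :=
            mul_le_mul_of_nonneg_left this h1γ.le
        _ = γ * ε * rmax := by field_simp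
    nlinarith [h2]
  intro s
  exact le_trans (hle s) hMfinal
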